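/- Let l be a finite distributive lattice (with its induced complete-lattice structure), Σ a finite alphabet (a finite type), A = (Q, δ, I, F) an l-VBA over Σ, and m ∈ l a sup-irreducible element. Then the m-cut of the ω-language of A equals the language of the classical Büchi automaton A_m: {w : ℕ → Σ | m ≤ L_ω(A)(w)} is exactly the set of words accepted by the Büchi automaton with state set Q, transition relation Δ_m = {(p, a, q) | m ≤ δ p a q}, initial set {q | m ≤ I q} and accepting set {q | m ≤ F q}. -/

import Mathlib

/-- The ω-language of an `l`-valued Büchi automaton `(Q, δ, I, F)`. -/
def vbaLang {l Q A : Type*} [CompleteLattice l]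
    (δ : Q → A → Q → l) (I : Q → l) (F : Q → l) (w : ℕ → A) : l :=
  ⨆ q : ℕ → Q, ⨆ J : {J : Set ℕ // J.Infinite},
    I (q 0) ⊓ (⨅ i : ℕ, δ (q i) (w i) (q (i + 1))) ⊓ ⨅ j ∈ J.1, F (q j)

/-- A classical nondeterministic Büchi automaton `(Δ, Q0, Acc)` accepts the
infinite word `w`. -/
def buchiAccepts {Q A : Type*} (Δ : Set (Q × A × Q)) (Q0 Acc : Set Q)
    (w : ℕ → A) : Prop :=
  ∃ q : ℕ → Q, q 0 ∈ Q0 ∧ (∀ i : ℕ, (q i, w i, q (i + 1)) ∈ Δ) ∧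
    {j : ℕ | q j ∈ Acc}.Infinite

lemma supIrred_prime {l : Type*} [Lattice l]
    (hd : ∀ x y z : l, x ⊓ (y ⊔ z) = (x ⊓ y) ⊔ (x ⊓ z))
    {m : l} (hm : SupIrred m) {a b : l} (h : m ≤ a ⊔ b) : m ≤ a ∨ m ≤ b := by
  have hme : m = (m ⊓ a) ⊔ (m ⊓ b) := by
    rw [← hd]; exact (inf_eq_left.mpr h).symm
  rcases hm.2 hme.symm with h' | h'
  · exact Or.inl (by rw [← h']; exact inf_le_right)
  · exact Or.inr (by rw [← h']; exact inf_le_right)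

lemma supIrred_le_sSup {l : Type*} [CompleteLattice l]
    (hd : ∀ x y z : l, x ⊓ (y ⊔ z) = (x ⊓ y) ⊔ (x ⊓ z))
    {m : l} (hm : SupIrred m) {s : Set l} (hs : s.Finite)
    (h : m ≤ sSup s) : ∃ a ∈ s, m ≤ a := by
  revert h
  refine Set.Finite.induction_on (motive := fun s _ => m ≤ sSup s → ∃ a ∈ s, m ≤ a) s hs ?_ ?_
  · intro h
    rw [sSup_empty, le_bot_iff] at h
    exact absurd (h ▸ isMin_bot) hm.1
  · intro a s ha hs ih h
    rw [sSup_insert] at h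
    rcases supIrred_prime hd hm h with h' | h'
    · exact ⟨a, Set.mem_insert _ _, h'⟩
    · obtain ⟨b, hb, hle⟩ := ih h'
      exact ⟨b, Set.mem_insert_of_mem _ hb, hle⟩

lemma supIrred_le_iSup {l : Type*} [CompleteLattice l] [Fintype l]
    (hd : ∀ x y z : l, x ⊓ (y ⊔ z) = (x ⊓ y) ⊔ (x ⊓ z))
    {m : l} (hm : SupIrred m) {ι : Sort*} {f : ι → l}
    (h : m ≤ ⨆ i, f i) : ∃ i, m ≤ f i := by
  obtain ⟨a, ha, hle⟩ := supIrred_le_sSup hd hm (Set.toFinite (Set.range f)) h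
  obtain ⟨i, rfl⟩ := ha
  exact ⟨i, hle⟩

/-- Over a finite distributive (complete) lattice, for a sup-irreducible `m`,
the `m`-cut of the ω-language of an `l`-VBA `A = (Q, δ, I, F)` is exactly the
language of the classical Büchi automaton `A_m` obtained by taking the
`m`-cuts of `δ`, `I` and `F`. -/
theorem stmt19 {l : Type*} [CompleteLattice l] [Fintype l]
    (hd : ∀ x y z : l, x ⊓ (y ⊔ z) = (x ⊓ y) ⊔ (x ⊓ z))
    {A Q : Type*} [Fintype A] [Fintype Q]
    (δ : Q → A → Q → l) (I F : Q → l) {m : l} (hm : SupIrred m) :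
    {w : ℕ → A | m ≤ vbaLang δ I F w} =
      {w : ℕ → A | buchiAccepts {t : Q × A × Q | m ≤ δ t.1 t.2.1 t.2.2}
        {q : Q | m ≤ I q} {q : Q | m ≤ F q} w} := by
  ext w
  simp only [Set.mem_setOf_eq]
  constructor
  · intro h
    obtain ⟨q, h⟩ := supIrred_le_iSup hd hm h
    obtain ⟨J, h⟩ := supIrred_le_iSup hd hm h
    refine ⟨q, ?_, ?_, ?_⟩
    · exact h.trans (inf_le_left.trans inf_le_left)
    · intro i
      exact h.trans ((inf_le_left.trans inf_le_right).trans (iInf_le _ i))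
    · refine J.2.mono fun j hj => ?_
      exact h.trans (inf_le_right.trans (iInf₂_le j hj))
  · rintro ⟨q, h0, hδ, hinf⟩
    refine le_trans ?_ (le_iSup_of_le q (le_iSup_of_le
      (⟨{j | m ≤ F (q j)}, hinf⟩ : {J : Set ℕ // J.Infinite}) le_rfl))
    exact le_inf (le_inf h0 (le_iInf hδ)) (le_iInf₂ fun j hj => hj)
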